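/- Let A₂ be symmetric positive semidefinite on ℝ^{m_I+m_B}, M symmetric positive definite on ℝ^{m_B}, and Ã₂ = A₂ + diag(0, M). If Ã₂ e₂ = (0, M e₁_B)ᵀ for e₂ = (e_{2,I}, e_{2,B}), then ‖e_{2,B}‖_M ≤ ‖e_{1,B}‖_M. -/

import Mathlib

open Matrix in
/-- Second half of Lemma 5.2: non-expansiveness of the interface error in the
Gauss–Seidel half-step on subdomain Ω₂ (A₂ only positive semidefinite). -/
theorem stmt9 {mI mB : ℕ}
    (A₂ : Matrix (Fin mI ⊕ Fin mB) (Fin mI ⊕ Fin mB) ℝ) (hA₂ : A₂.PosSemidef)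
    (M : Matrix (Fin mB) (Fin mB) ℝ) (hM : M.PosDef)
    (e₂ : Fin mI ⊕ Fin mB → ℝ) (e₁B : Fin mB → ℝ)
    (heq : (A₂ + Matrix.fromBlocks 0 0 0 M).mulVec e₂ = Sum.elim (0 : Fin mI → ℝ) (M.mulVec e₁B)) :
    Real.sqrt (M.mulVec (e₂ ∘ Sum.inr) ⬝ᵥ (e₂ ∘ Sum.inr))
      ≤ Real.sqrt (M.mulVec e₁B ⬝ᵥ e₁B) := by
  set eI := e₂ ∘ Sum.inl with hI
  set eB := e₂ ∘ Sum.inr with hB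
  have he₂ : e₂ = Sum.elim eI eB := (Sum.elim_comp_inl_inr e₂).symm
  set a := M.mulVec eB ⬝ᵥ eB with ha
  set b := M.mulVec e₁B ⬝ᵥ e₁B with hb
  set c := M.mulVec e₁B ⬝ᵥ eB with hc
  have hq : 0 ≤ e₂ ⬝ᵥ A₂.mulVec e₂ := by
    simpa [star_trivial] using hA₂.dotProduct_mulVec_nonneg e₂
  have h1 : e₂ ⬝ᵥ ((A₂ + Matrix.fromBlocks 0 0 0 M).mulVec e₂)
      = e₂ ⬝ᵥ Sum.elim (0 : Fin mI → ℝ) (M.mulVec e₁B) := by rw [heq]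
  have hFe : (Matrix.fromBlocks 0 0 0 M).mulVec (Sum.elim eI eB)
      = Sum.elim (0 : Fin mI → ℝ) (M.mulVec eB) := by
    rw [Matrix.fromBlocks_mulVec]
    simp
  rw [he₂] at h1 hq
  have h2 : (Sum.elim eI eB) ⬝ᵥ A₂.mulVec (Sum.elim eI eB) + a = c := by
    rw [add_mulVec, dotProduct_add, hFe] at h1
    rw [sumElim_dotProduct_sumElim, sumElim_dotProduct_sumElim] at h1
    simpa [ha, hc, dotProduct_comm] using h1
  have hac : a ≤ c := by linarith
  -- symmetry
  have hsym : ∀ x y : Fin mB → ℝ, M.mulVec x ⬝ᵥ y = M.mulVec y ⬝ᵥ x := by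
    intro x y
    rw [dotProduct_comm, dotProduct_mulVec, ← mulVec_transpose,
      show Mᵀ = M from hM.isHermitian.eq]
  have hd : 0 ≤ M.mulVec (e₁B - eB) ⬝ᵥ (e₁B - eB) := by
    have := (hM.posSemidef).dotProduct_mulVec_nonneg (e₁B - eB)
    simpa [star_trivial, dotProduct_comm] using this
  have hd' : 0 ≤ b - 2 * c + a := by
    have hexp : M.mulVec (e₁B - eB) ⬝ᵥ (e₁B - eB) = b - 2*c + a := by
      rw [mulVec_sub, sub_dotProduct, dotProduct_sub, dotProduct_sub, hsym eB e₁B]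
      rw [← hb, ← hc, ← ha]
      ring
    linarith [hexp ▸ hd]
  have hab : a ≤ b := by linarith
  exact Real.sqrt_le_sqrt hab
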